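/- Right nullspace inclusions between F_Φ^P and pencils in 𝕄₁(P): let P(λ) be regular and ℒ(λ) ∈ 𝕄₁(P). Then: (1) for every α ∈ ℂ, every u ∈ ℂ^{kn} with F_Φ^P(α)u = 0 also satisfies ℒ(α)u = 0, and every u with (rev₁ F_Φ^P)(0)u = 0 also satisfies (rev₁ ℒ)(0)u = 0; (2) if moreover ℒ(λ) is a linearization of P(λ), then these inclusions are equalities, i.e., for every α ∈ ℂ, ℒ(α)u = 0 implies F_Φ^P(α)u = 0, and (rev₁ ℒ)(0)u = 0 implies (rev₁ F_Φ^P)(0)u = 0. -/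

import Mathlib

open Polynomial Matrix

noncomputable section

/-- `Φ_k(λ) ⊗ I_n` as a `kn × n` polynomial matrix: its `i`-th block row (0-based)
is `φ_{k-1-i}(λ) I_n`. -/
def PhiMat (n k : ℕ) (φ : ℕ → Polynomial ℝ) :
    Matrix (Fin k × Fin n) (Fin n) (Polynomial ℝ) :=
  Matrix.of fun p s => if p.2 = s then φ (k - 1 - p.1.val) else 0

/-- The matrix polynomial `P(λ) = Σ_{i=0}^k P_i φ_i(λ)`. -/
def matP (n k : ℕ) (φ : ℕ → Polynomial ℝ) (Pm : ℕ → Matrix (Fin n) (Fin n) ℝ) :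
    Matrix (Fin n) (Fin n) (Polynomial ℝ) :=
  Matrix.of fun r s => ∑ i ∈ Finset.range (k + 1), C (Pm i r s) * φ i

/-- `v ⊗ Q` as a `kn × n` polynomial matrix. -/
def vKron (n k : ℕ) (v : Fin k → ℝ) (Q : Matrix (Fin n) (Fin n) (Polynomial ℝ)) :
    Matrix (Fin k × Fin n) (Fin n) (Polynomial ℝ) :=
  Matrix.of fun p s => C (v p.1) * Q p.2 s

/-- `v^T ⊗ Q` as an `n × kn` polynomial matrix. -/
def vKronRow (n k : ℕ) (v : Fin k → ℝ) (Q : Matrix (Fin n) (Fin n) (Polynomial ℝ)) :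
    Matrix (Fin n) (Fin k × Fin n) (Polynomial ℝ) :=
  Matrix.of fun s q => C (v q.1) * Q s q.2

/-- A matrix pencil: a matrix polynomial each of whose entries has degree at most `1`. -/
def IsPencil {m m' : Type*} (L : Matrix m m' (Polynomial ℝ)) : Prop :=
  ∀ p q, (L p q).degree ≤ 1

/-- `ℒ(λ) ∈ 𝕄₁(P)` with ansatz vector `v`, i.e. `ℒ(λ)(Φ_k(λ) ⊗ I_n) = v ⊗ P(λ)`. -/
def Ansatz1 (n k : ℕ) (φ : ℕ → Polynomial ℝ) (Pm : ℕ → Matrix (Fin n) (Fin n) ℝ)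
    (L : Matrix (Fin k × Fin n) (Fin k × Fin n) (Polynomial ℝ)) (v : Fin k → ℝ) : Prop :=
  L * PhiMat n k φ = vKron n k v (matP n k φ Pm)

/-- `ℒ(λ) ∈ 𝕄₂(P)` with ansatz vector `w`, i.e. `(Φ_k(λ)^T ⊗ I_n) ℒ(λ) = w^T ⊗ P(λ)`. -/
def Ansatz2 (n k : ℕ) (φ : ℕ → Polynomial ℝ) (Pm : ℕ → Matrix (Fin n) (Fin n) ℝ)
    (L : Matrix (Fin k × Fin n) (Fin k × Fin n) (Polynomial ℝ)) (w : Fin k → ℝ) : Prop :=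
  (PhiMat n k φ)ᵀ * L = vKronRow n k w (matP n k φ Pm)

/-- The anchor pencil `F_Φ^P(λ) = [m_Φ^P(λ); M_Φ(λ)]`. -/
def FPhi (n k : ℕ) (a b c : ℕ → ℝ) (Pm : ℕ → Matrix (Fin n) (Fin n) ℝ) :
    Matrix (Fin k × Fin n) (Fin k × Fin n) (Polynomial ℝ) :=
  Matrix.of fun p q =>
    if p.1.val = 0 then
      -- the block row m_Φ^P(λ)
      if q.1.val = 0 then
        C ((a (k - 1))⁻¹) * (X - C (b (k - 1))) * C (Pm k p.2 q.2) + C (Pm (k - 1) p.2 q.2)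
      else if q.1.val = 1 then
        C (Pm (k - 2) p.2 q.2) - C (c (k - 1) / a (k - 1)) * C (Pm k p.2 q.2)
      else
        C (Pm (k - 1 - q.1.val) p.2 q.2)
    else
      -- the block rows M_Φ(λ) = M_Φ^⋆(λ) ⊗ I_n
      (if q.1.val + 1 = p.1.val then -C (a (k - 1 - p.1.val))
       else if q.1.val = p.1.val then X - C (b (k - 1 - p.1.val))
       else if q.1.val = p.1.val + 1 then -C (c (k - 1 - p.1.val))
       else 0) * (if p.2 = q.2 then 1 else 0)

/-- The `kn × kn` real matrix `[v ⊗ I_n, B]`: first `n` columns form `v ⊗ I_n`,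
the remaining `(k-1)n` columns form `B`. -/
def extCols (n k : ℕ) (v : Fin k → ℝ)
    (B : Matrix (Fin k × Fin n) (Fin (k - 1) × Fin n) ℝ) :
    Matrix (Fin k × Fin n) (Fin k × Fin n) ℝ :=
  Matrix.of fun p q =>
    if h : q.1.val = 0 then (if p.2 = q.2 then v p.1 else 0)
    else B p (⟨q.1.val - 1, by have := q.1.isLt; omega⟩, q.2)

/-- The `kn × kn` real matrix `[w^T ⊗ I_n; B]`: first `n` rows form `w^T ⊗ I_n`,
the remaining `(k-1)n` rows form `B`. -/
def extRows (n k : ℕ) (w : Fin k → ℝ)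
    (B : Matrix (Fin (k - 1) × Fin n) (Fin k × Fin n) ℝ) :
    Matrix (Fin k × Fin n) (Fin k × Fin n) ℝ :=
  Matrix.of fun p q =>
    if h : p.1.val = 0 then (if p.2 = q.2 then w q.1 else 0)
    else B (⟨p.1.val - 1, by have := p.1.isLt; omega⟩, p.2) q

/-- A real matrix viewed as a constant matrix polynomial. -/
def liftC {m m' : Type*} (A : Matrix m m' ℝ) : Matrix m m' (Polynomial ℝ) :=
  A.map C

/-- Block transpose of a matrix consisting of `n × n` blocks: block `(i,j)` of `A^𝓑`
is block `(j,i)` of `A`. -/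
def blockTr {n k1 k2 : ℕ} {R : Type*} (A : Matrix (Fin k1 × Fin n) (Fin k2 × Fin n) R) :
    Matrix (Fin k2 × Fin n) (Fin k1 × Fin n) R :=
  Matrix.of fun p q => A (q.1, p.2) (p.1, q.2)

/-- `rev_d Q(λ) = λ^d Q(1/λ)`, entrywise reversal of a matrix polynomial of degree at most `d`. -/
def revMat {m m' : Type*} (d : ℕ) (L : Matrix m m' (Polynomial ℝ)) :
    Matrix m m' (Polynomial ℝ) :=
  Matrix.of fun p q => (L p q).reflect d

/-- Evaluation of a real matrix polynomial at a complex number. -/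
def evalC {m m' : Type*} (α : ℂ) (L : Matrix m m' (Polynomial ℝ)) : Matrix m m' ℂ :=
  Matrix.of fun p q => aeval α (L p q)

/-- A matrix polynomial viewed as a matrix over the field `ℝ(λ)` of rational functions. -/
def liftRat {m m' : Type*} (L : Matrix m m' (Polynomial ℝ)) : Matrix m m' (RatFunc ℝ) :=
  L.map (algebraMap (Polynomial ℝ) (RatFunc ℝ))

/-- `v ⊗ I_n` as a `kn × n` complex matrix. -/
def vKronC (n k : ℕ) (v : Fin k → ℝ) : Matrix (Fin k × Fin n) (Fin n) ℂ :=
  Matrix.of fun p s => if p.2 = s then (v p.1 : ℂ) else 0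

/-- `v ⊗ I_n` as a `kn × n` matrix over `ℝ(λ)`. -/
def vKronRat (n k : ℕ) (v : Fin k → ℝ) : Matrix (Fin k × Fin n) (Fin n) (RatFunc ℝ) :=
  Matrix.of fun p s => if p.2 = s then RatFunc.C (v p.1) else 0

/-- The pencil `Xm λ + Ym` as a matrix polynomial. -/
def pencilPoly {m : Type*} (Xm Ym : Matrix m m ℝ) : Matrix m m (Polynomial ℝ) :=
  Matrix.of fun p q => C (Xm p q) * X + C (Ym p q)

/-- `diag(P(λ), I_{(k-1)n})` as a `kn × kn` matrix polynomial. -/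
def diagPI (n k : ℕ) (Pp : Matrix (Fin n) (Fin n) (Polynomial ℝ)) :
    Matrix (Fin k × Fin n) (Fin k × Fin n) (Polynomial ℝ) :=
  Matrix.of fun p q =>
    if p.1.val = 0 ∧ q.1.val = 0 then Pp p.2 q.2 else if p = q then 1 else 0

/-- `ℒ(λ)` is a linearization of `P(λ)`: there are `U(λ), V(λ)` with nonzero real constant
determinants such that `U(λ)ℒ(λ)V(λ) = diag(P(λ), I_{(k-1)n})`. -/
def IsLinearization (n k : ℕ)
    (L : Matrix (Fin k × Fin n) (Fin k × Fin n) (Polynomial ℝ))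
    (Pp : Matrix (Fin n) (Fin n) (Polynomial ℝ)) : Prop :=
  ∃ U V : Matrix (Fin k × Fin n) (Fin k × Fin n) (Polynomial ℝ),
    (∃ cu : ℝ, cu ≠ 0 ∧ U.det = C cu) ∧ (∃ cv : ℝ, cv ≠ 0 ∧ V.det = C cv) ∧
    U * L * V = diagPI n k Pp

/-- `ℒ(λ)` is a strong linearization of `P(λ)` (of degree `k`): it is a linearization and
`rev₁ ℒ(λ)` is a linearization of `rev_k P(λ)`. -/
def IsStrongLin (n k : ℕ)
    (L : Matrix (Fin k × Fin n) (Fin k × Fin n) (Polynomial ℝ))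
    (Pp : Matrix (Fin n) (Fin n) (Polynomial ℝ)) : Prop :=
  IsLinearization n k L Pp ∧ IsLinearization n k (revMat 1 L) (revMat k Pp)


namespace Sol

variable (a b c : ℕ → ℝ)

/-- scalar row of `M_Φ^⋆` in φ-index coordinates -/
def rrow (j i : ℕ) : Polynomial ℝ :=
  (if i = j + 1 then -C (a j) else 0) + (if i = j then X - C (b j) else 0)
    + (if i + 1 = j then -C (c j) else 0)

lemma rrow_degree (j i : ℕ) : (rrow a b c j i).degree ≤ 1 := by
  unfold rrow
  refine le_trans (degree_add_le _ _) (max_le (le_trans (degree_add_le _ _) (max_le ?_ ?_)) ?_) <;>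
    split_ifs <;>
    simp [degree_neg] <;>
    first
      | exact le_trans (degree_C_le) (by norm_num)
      | exact le_of_eq (degree_X_sub_C _)

variable (φ : ℕ → Polynomial ℝ)
variable (ha : ∀ j, a j ≠ 0) (hφ0 : φ 0 = 1)
  (hφ1 : C (a 0) * φ 1 = (X - C (b 0)) * φ 0)
  (hφrec : ∀ j, C (a (j + 1)) * φ (j + 2) =
      (X - C (b (j + 1))) * φ (j + 1) - C (c (j + 1)) * φ j)

include hφ0 hφ1 hφrec in
lemma rrow_phi (j K : ℕ) (hK : j + 1 < K) :
    ∑ i ∈ Finset.range K, rrow a b c j i * φ i = 0 := by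
  unfold rrow
  simp only [add_mul, ite_mul, zero_mul, Finset.sum_add_distrib]
  rw [Finset.sum_ite_eq' (Finset.range K) (j+1), Finset.sum_ite_eq' (Finset.range K) j]
  have h1 : j + 1 ∈ Finset.range K := Finset.mem_range.2 hK
  have h2 : j ∈ Finset.range K := Finset.mem_range.2 (by omega)
  rw [if_pos h1, if_pos h2]
  rcases j with _ | j'
  · have : ∀ i ∈ Finset.range K, (if i + 1 = 0 then -C (c 0) * φ i else 0) = 0 := by
      intro i _; simp
    rw [Finset.sum_congr rfl this]
    simp only [Finset.sum_const_zero, add_zero]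
    rw [hφ0] at hφ1 ⊢
    rw [mul_one] at hφ1
    rw [mul_one]
    rw [← hφ1]; ring
  · have : ∀ i ∈ Finset.range K, (if i + 1 = j' + 1 then -C (c (j'+1)) * φ i else 0)
        = (if i = j' then -C (c (j'+1)) * φ i else 0) := by
      intro i _; congr 1; simp
    rw [Finset.sum_congr rfl this, Finset.sum_ite_eq' (Finset.range K) j']
    rw [if_pos (Finset.mem_range.2 (by omega))]
    have := hφrec j'
    linear_combination -this

include ha hφ0 hφ1 hφrec in
lemma phi_deg : ∀ j, (φ j).natDegree = j ∧ (φ j).coeff j ≠ 0 := by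
  have key : ∀ j, ((φ j).natDegree = j ∧ (φ j).coeff j ≠ 0) ∧
      ((φ (j+1)).natDegree = j + 1 ∧ (φ (j+1)).coeff (j+1) ≠ 0) := by
    intro j
    induction j with
    | zero =>
      have h0 : (φ 0).natDegree = 0 ∧ (φ 0).coeff 0 ≠ 0 := by
        rw [hφ0]; simp
      refine ⟨h0, ?_⟩
      rw [hφ0, mul_one] at hφ1
      have hd : (C (a 0) * φ 1).natDegree = 1 := by rw [hφ1, natDegree_X_sub_C]
      rw [natDegree_C_mul (ha 0)] at hd
      refine ⟨hd, ?_⟩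
      have : (C (a 0) * φ 1).coeff 1 = 1 := by rw [hφ1]; simp
      rw [coeff_C_mul] at this
      intro h; rw [h, mul_zero] at this; norm_num at this
    | succ j ih =>
      refine ⟨ih.2, ?_⟩
      have hrec := hφrec j
      have e1 : (φ j).coeff (j+2) = 0 :=
        coeff_eq_zero_of_natDegree_lt (by rw [ih.1.1]; omega)
      have e2 : (φ (j+1)).coeff (j+2) = 0 :=
        coeff_eq_zero_of_natDegree_lt (by rw [ih.2.1]; omega)
      have hc : (C (a (j+1)) * φ (j + 2)).coeff (j+2) = (φ (j+1)).coeff (j+1) := by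
        rw [hrec, coeff_sub, sub_mul, coeff_sub, coeff_X_mul, coeff_C_mul, coeff_C_mul,
          e1, e2]
        ring
      have hcoeff : (φ (j+2)).coeff (j+2) ≠ 0 := by
        intro h
        rw [coeff_C_mul, h, mul_zero] at hc
        exact ih.2.2 hc.symm
      have hdegle : (φ (j+2)).natDegree ≤ j + 2 := by
        have h1 : (C (a (j+1)) * φ (j + 2)).natDegree ≤ j + 2 := by
          rw [hrec]
          refine le_trans (natDegree_sub_le _ _) (max_le ?_ ?_)
          · exact le_trans natDegree_mul_le (by simp [natDegree_X_sub_C, ih.2.1]; try omega)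
          · exact le_trans natDegree_mul_le (by simp [ih.1.1])
        rwa [natDegree_C_mul (ha (j+1))] at h1
      exact ⟨le_antisymm hdegle (le_natDegree_of_ne_zero hcoeff), hcoeff⟩
  exact fun j => (key j).1


include ha hφ0 hφ1 hφrec in
lemma span_lemma : ∀ (K : ℕ) (h : ℕ → Polynomial ℝ), (∀ i, (h i).degree ≤ 1) →
    (∀ i, K ≤ i → h i = 0) → (∑ i ∈ Finset.range K, h i * φ i) = 0 →
    ∃ cf : ℕ → ℝ, ∀ i, h i = ∑ j ∈ Finset.range (K - 1), C (cf j) * rrow a b c j i := by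
  intro K
  induction K with
  | zero =>
    intro h _ hsupp _
    exact ⟨0, fun i => by simp [hsupp i (Nat.zero_le i)]⟩
  | succ K IH =>
    intro h hdeg hsupp hsum
    rcases K with _ | K'
    · -- K + 1 = 1
      refine ⟨0, fun i => ?_⟩
      simp only [Nat.sub_self, Finset.range_zero, Finset.sum_empty]
      rcases Nat.eq_zero_or_pos i with hi | hi
      · subst hi
        rw [Finset.sum_range_one, hφ0, mul_one] at hsum
        exact hsum
      · exact hsupp i hi
    · -- K = K' + 1 ≥ 1
      set K := K' + 1 with hK
      have hφK := phi_deg a b c φ ha hφ0 hφ1 hφrec K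
      have e3 : (φ K).coeff (K+1) = 0 :=
        coeff_eq_zero_of_natDegree_lt (by rw [hφK.1]; omega)
      -- the top entry is a constant
      have hc1 : (h K).coeff 1 = 0 := by
        have h0 : (∑ i ∈ Finset.range (K+1), h i * φ i).coeff (K+1) = 0 := by
          rw [hsum]; simp
        rw [finset_sum_coeff] at h0
        have hzero : ∀ i ∈ Finset.range K, (h i * φ i).coeff (K+1) = 0 := by
          intro i hi
          refine coeff_eq_zero_of_natDegree_lt (lt_of_le_of_lt natDegree_mul_le ?_)
          have h1 : (h i).natDegree ≤ 1 := natDegree_le_iff_degree_le.2 (by exact_mod_cast hdeg i)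
          have hφi := phi_deg a b c φ ha hφ0 hφ1 hφrec i
          rw [hφi.1]
          have := Finset.mem_range.1 hi
          omega
        rw [Finset.sum_range_succ, Finset.sum_congr rfl hzero] at h0
        simp only [Finset.sum_const_zero, zero_add] at h0
        have hsplit : h K * φ K = C ((h K).coeff 1) * (X * φ K) + C ((h K).coeff 0) * φ K := by
          conv_lhs => rw [eq_X_add_C_of_degree_le_one (hdeg K)]
          ring
        rw [hsplit, coeff_add, coeff_C_mul, coeff_C_mul, coeff_X_mul, e3, mul_zero,
          add_zero] at h0
        exact (mul_eq_zero.1 h0).resolve_right hφK.2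
      have hhK : h K = C ((h K).coeff 0) := by
        conv_lhs => rw [eq_X_add_C_of_degree_le_one (hdeg K)]
        rw [hc1]; simp
      set t : ℝ := (h K).coeff 0 with ht
      have hr1 : rrow a b c K' K = -C (a K') := by
        unfold rrow
        rw [hK, if_pos rfl, if_neg (by omega), if_neg (by omega)]
        ring
      have hr0 : ∀ i, K + 1 ≤ i → rrow a b c K' i = 0 := by
        intro i hi
        unfold rrow
        rw [if_neg (by omega), if_neg (by omega), if_neg (by omega)]
        ring
      set h' : ℕ → Polynomial ℝ := fun i => h i + C (t / a K') * rrow a b c K' i with hh'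
      have hh'K : h' K = 0 := by
        simp only [hh']
        rw [hr1, hhK, mul_neg, ← Polynomial.C_mul, div_mul_cancel₀ _ (ha K')]
        ring
      have hh'supp : ∀ i, K ≤ i → h' i = 0 := by
        intro i hi
        rcases Nat.eq_or_lt_of_le hi with hi' | hi'
        · rw [← hi']; exact hh'K
        · simp only [hh']
          rw [hr0 i (by omega), hsupp i (by omega)]
          simp
      have hh'deg : ∀ i, (h' i).degree ≤ 1 := by
        intro i
        refine le_trans (degree_add_le _ _) (max_le (hdeg i) ?_)
        refine le_trans (degree_mul_le _ _) ?_
        calc (C (t / a K')).degree + (rrow a b c K' i).degree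
            ≤ 0 + 1 := add_le_add degree_C_le (rrow_degree a b c K' i)
          _ = 1 := by norm_num
      have hh'sum : ∑ i ∈ Finset.range K, h' i * φ i = 0 := by
        have hs : ∑ i ∈ Finset.range (K+1), h' i * φ i
            = (∑ i ∈ Finset.range (K+1), h i * φ i)
              + C (t / a K') * ∑ i ∈ Finset.range (K+1), rrow a b c K' i * φ i := by
          rw [Finset.mul_sum, ← Finset.sum_add_distrib]
          refine Finset.sum_congr rfl fun i _ => ?_
          simp only [hh']
          ring
        rw [hsum, rrow_phi a b c φ hφ0 hφ1 hφrec K' (K+1) (by omega), mul_zero,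
          zero_add] at hs
        rw [Finset.sum_range_succ, hh'K, zero_mul, add_zero] at hs
        exact hs
      obtain ⟨cf', hcf'⟩ := IH h' hh'deg hh'supp hh'sum
      classical
      refine ⟨Function.update cf' K' (-(t / a K')), fun i => ?_⟩
      have hKm : K + 1 - 1 = K' + 1 := by omega
      rw [hKm, Finset.sum_range_succ]
      have hterm : ∀ j ∈ Finset.range K',
          C (Function.update cf' K' (-(t / a K')) j) * rrow a b c j i
            = C (cf' j) * rrow a b c j i := by
        intro j hj
        rw [Function.update_of_ne (by have := Finset.mem_range.1 hj; omega)]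
      rw [Finset.sum_congr rfl hterm, Function.update_self]
      have hhi : h i = h' i - C (t / a K') * rrow a b c K' i := by
        simp only [hh']; ring
      have hKm2 : K - 1 = K' := by omega
      rw [hhi, hcf' i, hKm2, map_neg]
      ring

variable {n : ℕ}

/-- entry `j` of the top block row `m_Φ^P(λ)` -/
def mEnt (k : ℕ) (Pm : ℕ → Matrix (Fin n) (Fin n) ℝ) (r s : Fin n) (j : ℕ) : Polynomial ℝ :=
  if j = 0 then
    C ((a (k - 1))⁻¹) * (X - C (b (k - 1))) * C (Pm k r s) + C (Pm (k - 1) r s)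
  else if j = 1 then
    C (Pm (k - 2) r s) - C (c (k - 1) / a (k - 1)) * C (Pm k r s)
  else C (Pm (k - 1 - j) r s)

lemma mEnt_degree (k : ℕ) (Pm : ℕ → Matrix (Fin n) (Fin n) ℝ) (r s : Fin n) (j : ℕ) :
    (mEnt a b c k Pm r s j).degree ≤ 1 := by
  unfold mEnt
  split_ifs
  · refine le_trans (degree_add_le _ _) (max_le ?_ (le_trans degree_C_le (by norm_num)))
    refine le_trans (degree_mul_le _ _) ?_
    calc (C ((a (k-1))⁻¹) * (X - C (b (k-1)))).degree + (C (Pm k r s)).degree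
        ≤ (0 + 1) + 0 := add_le_add (le_trans (degree_mul_le _ _)
            (add_le_add degree_C_le (le_of_eq (degree_X_sub_C _)))) degree_C_le
      _ ≤ 1 := by norm_num
  · refine le_trans (degree_sub_le _ _) (max_le (le_trans degree_C_le (by norm_num)) ?_)
    refine le_trans (degree_mul_le _ _) ?_
    calc (C (c (k-1) / a (k-1))).degree + (C (Pm k r s)).degree
        ≤ 0 + 0 := add_le_add degree_C_le degree_C_le
      _ ≤ 1 := by norm_num
  · exact le_trans degree_C_le (by norm_num)

include ha hφ0 hφ1 hφrec in
lemma mEnt_sum (m : ℕ) (Pm : ℕ → Matrix (Fin n) (Fin n) ℝ) (r s : Fin n) :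
    ∑ j ∈ Finset.range (m + 2), mEnt a b c (m + 2) Pm r s j * φ (m + 2 - 1 - j)
      = matP n (m + 2) φ Pm r s := by
  have φeq : φ (m+2) = C ((a (m+1))⁻¹) * ((X - C (b (m+1))) * φ (m+1) - C (c (m+1)) * φ m) := by
    have h2 : (a (m+1))⁻¹ * (a (m+1)) = 1 := inv_mul_cancel₀ (ha _)
    calc φ (m+2) = C ((a (m+1))⁻¹ * a (m+1)) * φ (m+2) := by rw [h2, Polynomial.C_1, one_mul]
      _ = C ((a (m+1))⁻¹) * (C (a (m+1)) * φ (m+2)) := by rw [Polynomial.C_mul, mul_assoc]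
      _ = _ := by rw [hφrec m]
  rw [Finset.sum_range_succ', Finset.sum_range_succ']
  have hstep : ∀ j ∈ Finset.range m,
      mEnt a b c (m+2) Pm r s (j+1+1) * φ (m + 2 - 1 - (j+1+1))
        = C (Pm (m - 1 - j) r s) * φ (m - 1 - j) := by
    intro j hj
    unfold mEnt
    rw [if_neg (by omega), if_neg (by omega)]
    have e : m + 2 - 1 - (j+1+1) = m - 1 - j := by omega
    rw [e]
  rw [Finset.sum_congr rfl hstep, Finset.sum_range_reflect (fun i => C (Pm i r s) * φ i) m]
  have hm1 : mEnt a b c (m+2) Pm r s 1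
      = C (Pm m r s) - C (c (m+1) / a (m+1)) * C (Pm (m+2) r s) := by
    unfold mEnt; norm_num
  have hm0 : mEnt a b c (m+2) Pm r s 0
      = C ((a (m+1))⁻¹) * (X - C (b (m+1))) * C (Pm (m+2) r s) + C (Pm (m+1) r s) := by
    unfold mEnt; norm_num
  rw [show (0:ℕ) + 1 = 1 from rfl, show m + 2 - 1 - 1 = m from by omega,
    show m + 2 - 1 - 0 = m + 1 from by omega, hm1, hm0]
  unfold matP
  simp only [Matrix.of_apply]
  rw [Finset.sum_range_succ, Finset.sum_range_succ, Finset.sum_range_succ]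
  rw [φeq]
  have hdiv : c (m+1) / a (m+1) = (a (m+1))⁻¹ * c (m+1) := by
    rw [div_eq_mul_inv]; ring
  rw [hdiv, Polynomial.C_mul]
  ring

lemma reflect_finsum {ι : Type*} (N : ℕ) (s : Finset ι) (f : ι → Polynomial ℝ) :
    Polynomial.reflect (R := ℝ) N (∑ i ∈ s, f i) = ∑ i ∈ s, Polynomial.reflect (R := ℝ) N (f i) := by
  classical
  induction s using Finset.cons_induction_on with
  | empty => simp
  | cons _ _ ha ih => rw [Finset.sum_cons, Finset.sum_cons, reflect_add, ih]

lemma evalC_mul {d : Type*} [Fintype d] (α : ℂ) (A B : Matrix d d (Polynomial ℝ)) :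
    evalC α (A * B) = evalC α A * evalC α B := by
  ext p q
  simp only [evalC, Matrix.of_apply, Matrix.mul_apply, map_sum, _root_.map_mul]

lemma revMat_constMul {d : Type*} [Fintype d] (E : Matrix d d ℝ)
    (B : Matrix d d (Polynomial ℝ)) :
    revMat 1 (E.map C * B) = E.map C * revMat 1 B := by
  ext p q
  simp only [revMat, Matrix.of_apply, Matrix.mul_apply, Matrix.map_apply]
  rw [reflect_finsum (ι := d) 1 Finset.univ (fun r => C (E p r) * B r q)]
  have : ∀ r : d, Polynomial.reflect (R := ℝ) 1 (C (E p r) * B r q)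
      = C (E p r) * Polynomial.reflect (R := ℝ) 1 (B r q) :=
    fun r => reflect_C_mul (B r q) (E p r) 1
  simp only [this]

def dEquiv (n m : ℕ) : (Fin n ⊕ (Fin (m+1) × Fin n)) ≃ (Fin (m+2) × Fin n) where
  toFun x := Sum.elim (fun s => ((0 : Fin (m+2)), s))
    (fun is => ((⟨is.1.val + 1, by have := is.1.isLt; omega⟩ : Fin (m+2)), is.2)) x
  invFun p := if h : p.1.val = 0 then Sum.inl p.2
    else Sum.inr (⟨p.1.val - 1, by have := p.1.isLt; omega⟩, p.2)
  left_inv x := by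
    dsimp only
    rcases x with s | ⟨i, s⟩
    · simp only [Sum.elim_inl]
      exact dif_pos (by simp)
    · simp only [Sum.elim_inr]
      refine (dif_neg (by simp)).trans ?_
      simp
  right_inv p := by
    dsimp only
    by_cases h : p.1.val = 0
    · rw [dif_pos h]
      simp only [Sum.elim_inl]
      exact Prod.ext (Fin.ext h.symm) rfl
    · rw [dif_neg h]
      simp only [Sum.elim_inr]
      refine Prod.ext (Fin.ext ?_) rfl
      have := p.1.isLt
      simp only []
      show (p.1.val - 1) + 1 = p.1.val
      omega

lemma det_diagPI (n m : ℕ) (Pp : Matrix (Fin n) (Fin n) (Polynomial ℝ)) :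
    (diagPI n (m+2) Pp).det = Pp.det := by
  have hsymm : ∀ (r : Fin (m+2) × Fin n), (dEquiv n m).symm r
      = if h : r.1.val = 0 then Sum.inl r.2
        else Sum.inr (⟨r.1.val - 1, by have := r.1.isLt; omega⟩, r.2) := fun r => rfl
  have hmat : diagPI n (m+2) Pp
      = (Matrix.reindex (dEquiv n m) (dEquiv n m))
          (Matrix.fromBlocks Pp 0 0
            (1 : Matrix (Fin (m+1) × Fin n) (Fin (m+1) × Fin n) (Polynomial ℝ))) := by
    ext p q
    simp only [Matrix.reindex_apply, Matrix.submatrix_apply, hsymm]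
    by_cases hp : p.1.val = 0 <;> by_cases hq : q.1.val = 0
    · rw [dif_pos hp, dif_pos hq, Matrix.fromBlocks_apply₁₁]
      unfold diagPI
      rw [Matrix.of_apply, if_pos ⟨hp, hq⟩]
    · rw [dif_pos hp, dif_neg hq, Matrix.fromBlocks_apply₁₂]
      unfold diagPI
      rw [Matrix.of_apply, if_neg (fun hand => hq hand.2),
        if_neg (fun hpq => hq (by rw [← hpq]; exact hp))]
      rfl
    · rw [dif_neg hp, dif_pos hq, Matrix.fromBlocks_apply₂₁]
      unfold diagPI
      rw [Matrix.of_apply, if_neg (fun hand => hp hand.1),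
        if_neg (fun hpq => hp (by rw [hpq]; exact hq))]
      rfl
    · rw [dif_neg hp, dif_neg hq, Matrix.fromBlocks_apply₂₂]
      unfold diagPI
      rw [Matrix.of_apply, if_neg (fun hand => hp hand.1), Matrix.one_apply]
      by_cases hpq : p = q
      · rw [if_pos hpq, if_pos (by rw [hpq])]
      · rw [if_neg hpq, if_neg ?_]
        intro hcon
        apply hpq
        rw [Prod.mk.injEq] at hcon
        obtain ⟨hc1, hc2⟩ := hcon
        have h1 : p.1.val - 1 = q.1.val - 1 := congrArg Fin.val hc1
        have : p.1 = q.1 := Fin.ext (by omega)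
        exact Prod.ext this hc2
  rw [hmat, Matrix.det_reindex_self, Matrix.det_fromBlocks_zero₂₁, Matrix.det_one, mul_one]

end Sol
theorem statement_6
    (n k : ℕ) (hn : 0 < n) (hk : 2 ≤ k)
    (a b c : ℕ → ℝ) (ha : ∀ j, a j ≠ 0)
    (φ : ℕ → Polynomial ℝ) (hφ0 : φ 0 = 1)
    (hφ1 : C (a 0) * φ 1 = (X - C (b 0)) * φ 0)
    (hφrec : ∀ j, C (a (j + 1)) * φ (j + 2) =
      (X - C (b (j + 1))) * φ (j + 1) - C (c (j + 1)) * φ j)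
    (Pm : ℕ → Matrix (Fin n) (Fin n) ℝ) (hPk : Pm k ≠ 0)
    (hreg : (matP n k φ Pm).det ≠ 0)
    (L : Matrix (Fin k × Fin n) (Fin k × Fin n) (Polynomial ℝ)) (hL : IsPencil L) (v : Fin k → ℝ) (hv : Ansatz1 n k φ Pm L v) :
    (∀ (α : ℂ) (u : Fin k × Fin n → ℂ),
        (evalC α (FPhi n k a b c Pm)).mulVec u = 0 → (evalC α L).mulVec u = 0) ∧
    (∀ u : Fin k × Fin n → ℂ,
        (evalC 0 (revMat 1 (FPhi n k a b c Pm))).mulVec u = 0 →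
          (evalC 0 (revMat 1 L)).mulVec u = 0) ∧
    (IsLinearization n k L (matP n k φ Pm) →
      (∀ (α : ℂ) (u : Fin k × Fin n → ℂ),
          (evalC α L).mulVec u = 0 → (evalC α (FPhi n k a b c Pm)).mulVec u = 0) ∧
      (∀ u : Fin k × Fin n → ℂ,
          (evalC 0 (revMat 1 L)).mulVec u = 0 →
            (evalC 0 (revMat 1 (FPhi n k a b c Pm))).mulVec u = 0)) := by
  obtain ⟨m, rfl⟩ : ∃ m, k = m + 2 := ⟨k - 2, by omega⟩
  -- the rows of the ansatz equation
  have hrow : ∀ (p : Fin (m+2) × Fin n) (s : Fin n),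
      ∑ j ∈ Finset.range (m+2),
        (if hj : j < m+2 then L p (⟨j, hj⟩, s) else 0) * φ (m + 1 - j)
        = C (v p.1) * matP n (m+2) φ Pm p.2 s := by
    intro p s
    have h1 := Matrix.ext_iff.2 hv p s
    rw [Matrix.mul_apply, Fintype.sum_prod_type] at h1
    unfold vKron at h1
    rw [Matrix.of_apply] at h1
    rw [← h1, ← Fin.sum_univ_eq_sum_range
      (fun j => (if hj : j < m+2 then L p (⟨j, hj⟩, s) else 0) * φ (m + 1 - j)) (m+2)]
    refine Fintype.sum_congr _ _ fun q1 => ?_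
    rw [dif_pos q1.isLt, Fin.eta]
    have e0 : ∀ q2 : Fin n, L p (q1, q2) * PhiMat n (m+2) φ (q1, q2) s
        = if q2 = s then L p (q1, q2) * φ (m + 1 - q1.val) else 0 := by
      intro q2
      unfold PhiMat
      rw [Matrix.of_apply]
      have e1 : m + 2 - 1 - q1.val = m + 1 - q1.val := by omega
      rw [e1]
      split_ifs <;> ring
    rw [Fintype.sum_congr _ _ e0, Finset.sum_ite_eq' Finset.univ s
      (fun q2 => L p (q1, q2) * φ (m + 1 - q1.val)), if_pos (Finset.mem_univ s)]
  have hm := fun (r s : Fin n) => Sol.mEnt_sum a b c φ ha hφ0 hφ1 hφrec m Pm r s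
  -- existence of the coefficients
  have key : ∀ (p : Fin (m+2) × Fin n) (s : Fin n), ∃ cf : ℕ → ℝ, ∀ i : ℕ,
      (if hi : i < m+2 then
         L p (⟨m + 1 - i, by omega⟩, s)
           - C (v p.1) * Sol.mEnt a b c (m+2) Pm p.2 s (m + 1 - i)
       else 0)
      = ∑ j ∈ Finset.range (m + 2 - 1), C (cf j) * Sol.rrow a b c j i := by
    intro p s
    refine Sol.span_lemma a b c φ ha hφ0 hφ1 hφrec (m+2) _ ?_ ?_ ?_
    · intro i
      by_cases hi : i < m+2
      · rw [dif_pos hi]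
        refine le_trans (degree_sub_le _ _) (max_le (hL _ _) ?_)
        refine le_trans (degree_mul_le _ _) ?_
        calc (C (v p.1)).degree + (Sol.mEnt a b c (m+2) Pm p.2 s (m + 1 - i)).degree
            ≤ 0 + 1 := add_le_add degree_C_le (Sol.mEnt_degree a b c (m+2) Pm p.2 s _)
          _ = 1 := by norm_num
      · rw [dif_neg hi, degree_zero]; exact bot_le
    · intro i hi
      rw [dif_neg (by omega)]
    · have hrefl := Finset.sum_range_reflect
        (fun i => (if hi : i < m+2 then
           L p (⟨m + 1 - i, by omega⟩, s)
             - C (v p.1) * Sol.mEnt a b c (m+2) Pm p.2 s (m + 1 - i)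
         else 0) * φ i) (m+2)
      rw [← hrefl]
      have hterm : ∀ j ∈ Finset.range (m+2),
          (if hi : m + 2 - 1 - j < m+2 then
             L p (⟨m + 1 - (m + 2 - 1 - j), by omega⟩, s)
               - C (v p.1) * Sol.mEnt a b c (m+2) Pm p.2 s (m + 1 - (m + 2 - 1 - j))
           else 0) * φ (m + 2 - 1 - j)
          = (if hj : j < m+2 then L p (⟨j, hj⟩, s) else 0) * φ (m + 1 - j)
            - C (v p.1) * (Sol.mEnt a b c (m+2) Pm p.2 s j * φ (m + 2 - 1 - j)) := by
        intro j hj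
        have hj' := Finset.mem_range.1 hj
        rw [dif_pos (by omega : m + 2 - 1 - j < m + 2), dif_pos hj']
        have e1 : m + 1 - (m + 2 - 1 - j) = j := by omega
        simp only [e1]
        have e2 : m + 2 - 1 - j = m + 1 - j := by omega
        simp only [e2]
        ring
      rw [Finset.sum_congr rfl hterm, Finset.sum_sub_distrib, hrow p s]
      have : ∑ j ∈ Finset.range (m+2),
          C (v p.1) * (Sol.mEnt a b c (m+2) Pm p.2 s j * φ (m + 2 - 1 - j))
          = C (v p.1) * matP n (m+2) φ Pm p.2 s := by
        rw [← Finset.mul_sum, hm p.2 s]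
      rw [this]
      ring
  choose cf hcf using key
  -- matching the M-block with the scalar rows
  have hMrow : ∀ (i j : Fin (m+2)), 1 ≤ i.val →
      (if j.val + 1 = i.val then -C (a (m + 2 - 1 - i.val))
       else if j.val = i.val then X - C (b (m + 2 - 1 - i.val))
       else if j.val = i.val + 1 then -C (c (m + 2 - 1 - i.val))
       else 0) = Sol.rrow a b c (m + 1 - i.val) (m + 1 - j.val) := by
    intro i j hi
    have hi2 := i.isLt
    have hj2 := j.isLt
    have eik : m + 2 - 1 - i.val = m + 1 - i.val := by omega
    unfold Sol.rrow
    by_cases h1 : j.val + 1 = i.val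
    · rw [if_pos h1, if_pos (show m + 1 - j.val = (m + 1 - i.val) + 1 by omega),
        if_neg (by omega), if_neg (by omega), eik]
      ring
    · by_cases h2 : j.val = i.val
      · rw [if_neg h1, if_pos h2, if_neg (by omega), if_pos (by omega),
          if_neg (by omega), eik]
        ring
      · by_cases h3 : j.val = i.val + 1
        · rw [if_neg h1, if_neg h2, if_pos h3, if_neg (by omega), if_neg (by omega),
            if_pos (by omega), eik]
          ring
        · rw [if_neg h1, if_neg h2, if_neg h3, if_neg (by omega), if_neg (by omega),
            if_neg (by omega)]
          ring
  -- the constant matrix E with L = E * F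
  set E : Matrix (Fin (m+2) × Fin n) (Fin (m+2) × Fin n) ℝ :=
    Matrix.of fun p q =>
      if q.1.val = 0 then (if p.2 = q.2 then v p.1 else 0)
      else cf p q.2 (m + 1 - q.1.val) with hEdef
  have hzval : ((0 : Fin (m+2)) : ℕ) = 0 := by simp
  have hLE : L = E.map C * FPhi n (m+2) a b c Pm := by
    ext p q
    rw [Matrix.mul_apply, Fintype.sum_prod_type, Fin.sum_univ_succ]
    have hfirst : ∑ r2 : Fin n,
        (E.map C) p ((0 : Fin (m+2)), r2) * FPhi n (m+2) a b c Pm ((0 : Fin (m+2)), r2) q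
        = C (v p.1) * Sol.mEnt a b c (m+2) Pm p.2 q.2 q.1.val := by
      have e0 : ∀ r2 : Fin n,
          (E.map C) p ((0 : Fin (m+2)), r2) * FPhi n (m+2) a b c Pm ((0 : Fin (m+2)), r2) q
          = if p.2 = r2 then C (v p.1) * FPhi n (m+2) a b c Pm ((0 : Fin (m+2)), r2) q
            else 0 := by
        intro r2
        rw [Matrix.map_apply, hEdef, Matrix.of_apply, if_pos hzval]
        split_ifs <;> simp
      rw [Fintype.sum_congr _ _ e0, Finset.sum_ite_eq Finset.univ p.2
        (fun r2 => C (v p.1) * FPhi n (m+2) a b c Pm ((0 : Fin (m+2)), r2) q),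
        if_pos (Finset.mem_univ _)]
      congr 1
    have hsecond : ∀ r1 : Fin (m+1),
        ∑ r2 : Fin n,
          (E.map C) p (r1.succ, r2) * FPhi n (m+2) a b c Pm (r1.succ, r2) q
          = C (cf p q.2 (m - r1.val)) * Sol.rrow a b c (m - r1.val) (m + 1 - q.1.val) := by
      intro r1
      have hsuccval : (r1.succ : Fin (m+2)).val = r1.val + 1 := rfl
      have esv : m + 1 - (r1.succ : Fin (m+2)).val = m - r1.val := by
        rw [hsuccval]; omega
      have hMS : ∀ r2 : Fin n, FPhi n (m+2) a b c Pm (r1.succ, r2) q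
          = Sol.rrow a b c (m - r1.val) (m + 1 - q.1.val) * (if r2 = q.2 then 1 else 0) := by
        intro r2
        unfold FPhi
        rw [Matrix.of_apply, if_neg (by rw [hsuccval]; omega)]
        congr 1
        rw [hMrow r1.succ q.1 (by rw [hsuccval]; omega), esv]
      have e0 : ∀ r2 : Fin n,
          (E.map C) p (r1.succ, r2) * FPhi n (m+2) a b c Pm (r1.succ, r2) q
          = if r2 = q.2 then
              C (cf p r2 (m - r1.val)) * Sol.rrow a b c (m - r1.val) (m + 1 - q.1.val)
            else 0 := by
        intro r2
        rw [hMS r2, Matrix.map_apply, hEdef, Matrix.of_apply,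
          if_neg (by rw [hsuccval]; omega), esv]
        split_ifs <;> ring
      rw [Fintype.sum_congr _ _ e0, Finset.sum_ite_eq' Finset.univ q.2
        (fun r2 => C (cf p r2 (m - r1.val)) * Sol.rrow a b c (m - r1.val) (m + 1 - q.1.val)),
        if_pos (Finset.mem_univ _)]
    rw [hfirst, Fintype.sum_congr _ _ hsecond]
    rw [Fin.sum_univ_eq_sum_range
      (fun x => C (cf p q.2 (m - x)) * Sol.rrow a b c (m - x) (m + 1 - q.1.val)) (m+1)]
    have hre : ∑ x ∈ Finset.range (m+1),
        C (cf p q.2 (m - x)) * Sol.rrow a b c (m - x) (m + 1 - q.1.val)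
        = ∑ x ∈ Finset.range (m+1),
            C (cf p q.2 x) * Sol.rrow a b c x (m + 1 - q.1.val) := by
      rw [← Finset.sum_range_reflect
        (fun x => C (cf p q.2 x) * Sol.rrow a b c x (m + 1 - q.1.val)) (m+1)]
      refine Finset.sum_congr rfl fun x hx => ?_
      have : m + 1 - 1 - x = m - x := by omega
      rw [this]
    rw [hre]
    have hkey := hcf p q.2 (m + 1 - q.1.val)
    rw [dif_pos (by omega : m + 1 - q.1.val < m + 2)] at hkey
    have hq1 := q.1.isLt
    have e1 : m + 1 - (m + 1 - q.1.val) = q.1.val := by omega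
    simp only [e1] at hkey
    rw [Fin.eta, Prod.mk.eta] at hkey
    have e2 : m + 2 - 1 = m + 1 := by omega
    rw [e2] at hkey
    have : L p q = C (v p.1) * Sol.mEnt a b c (m+2) Pm p.2 q.2 q.1.val
        + ∑ j ∈ Finset.range (m+1), C (cf p q.2 j) * Sol.rrow a b c j (m + 1 - q.1.val) := by
      rw [← hkey]; ring
    rw [this]
  refine ⟨?_, ?_, ?_⟩
  · intro α u hu
    rw [hLE, Sol.evalC_mul, ← Matrix.mulVec_mulVec, hu, Matrix.mulVec_zero]
  · intro u hu
    rw [hLE, Sol.revMat_constMul, Sol.evalC_mul, ← Matrix.mulVec_mulVec, hu,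
      Matrix.mulVec_zero]
  · intro hlin
    obtain ⟨U, V, ⟨cu, hcu, hcud⟩, ⟨cv, hcv, hcvd⟩, hUV⟩ := hlin
    have hdetL : L.det ≠ 0 := by
      intro h0
      have hd := congrArg Matrix.det hUV
      rw [Matrix.det_mul, Matrix.det_mul, h0, mul_zero, zero_mul,
        Sol.det_diagPI] at hd
      exact hreg hd.symm
    have hdetE : E.det ≠ 0 := by
      intro h0
      apply hdetL
      rw [hLE, Matrix.det_mul]
      have hme : C (E.det) = (E.map C).det := by
        rw [RingHom.map_det (C : ℝ →+* Polynomial ℝ) E, RingHom.mapMatrix_apply]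
      rw [← hme, h0, map_zero, zero_mul]
    have hEinv : E⁻¹ * E = 1 := Matrix.nonsing_inv_mul E (isUnit_iff_ne_zero.mpr hdetE)
    have hFE : FPhi n (m+2) a b c Pm = (E⁻¹).map C * L := by
      rw [hLE, ← Matrix.mul_assoc,
        ← Matrix.map_mul (f := (C : ℝ →+* Polynomial ℝ)), hEinv,
        Matrix.map_one _ (map_zero C) (map_one C), Matrix.one_mul]
    constructor
    · intro α u hu
      rw [hFE, Sol.evalC_mul, ← Matrix.mulVec_mulVec, hu, Matrix.mulVec_zero]
    · intro u hu
      rw [hFE, Sol.revMat_constMul, Sol.evalC_mul, ← Matrix.mulVec_mulVec, hu,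
        Matrix.mulVec_zero]
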